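/- Let p ∈ (0,1)^C with Σ_k p_k = 1 and let ã ~ N(a, λΣ) be a Gaussian vector in ℝ^A. Then Σ_{k=1}^C p_k · E_ã[−log(exp(w_kᵀã+b_k)/Σ_j exp(w_jᵀã+b_j))] ≤ Σ_{k=1}^C −p_k log(exp(w_kᵀa+b_k)/Σ_{j=1}^C exp(w_jᵀa+b_j+(λ/2)(w_j−w_k)ᵀΣ(w_j−w_k))). -/

import Mathlib

open MeasureTheory ProbabilityTheory Real Matrix
open scoped NNReal

/-- A random vector `X : Ω → (Fin A → ℝ)` is multivariate Gaussian with mean `m` and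
covariance matrix `S` iff every linear functional of it is a one-dimensional Gaussian
with the corresponding mean and variance (Cramér–Wold characterization). -/
def IsMvGaussian {Ω : Type*} [MeasurableSpace Ω] {A : ℕ} (P : Measure Ω)
    (X : Ω → Fin A → ℝ) (m : Fin A → ℝ) (S : Matrix (Fin A) (Fin A) ℝ) : Prop :=
  ∀ v : Fin A → ℝ,
    P.map (fun ω => v ⬝ᵥ X ω) = gaussianReal (v ⬝ᵥ m) (Real.toNNReal (v ⬝ᵥ S.mulVec v))

section Aux

open scoped ENNReal

lemma exp_mul_gaussianPDFReal' (μ : ℝ) (v : ℝ≥0) (x : ℝ) :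
    Real.exp x * gaussianPDFReal μ v x
      = Real.exp (μ + v / 2) * gaussianPDFReal (μ + v) v x := by
  by_cases hv : v = 0
  · simp [hv, gaussianPDFReal_zero_var]
  · have hv' : (0:ℝ) < (v:ℝ) := by positivity
    simp only [gaussianPDFReal]
    rw [mul_left_comm, ← Real.exp_add, mul_left_comm, ← Real.exp_add]
    congr 1
    field_simp
    ring

lemma integral_exp_gaussianReal' (μ : ℝ) (v : ℝ≥0) :
    ∫ x, Real.exp x ∂(gaussianReal μ v) = Real.exp (μ + v / 2) := by
  by_cases hv : v = 0
  · rw [hv, gaussianReal_zero_var, integral_dirac]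
    simp
  · rw [gaussianReal_of_var_ne_zero _ hv]
    have hd : gaussianPDF μ v
        = fun x => ((Real.toNNReal (gaussianPDFReal μ v x) : ℝ≥0) : ENNReal) := by
      ext x; simp [gaussianPDF, ENNReal.ofReal]
    rw [hd, integral_withDensity_eq_integral_smul
      ((measurable_gaussianPDFReal μ v).real_toNNReal)]
    have : ∀ x, (Real.toNNReal (gaussianPDFReal μ v x)) • Real.exp x
        = Real.exp (μ + v/2) * gaussianPDFReal (μ + v) v x := by
      intro x
      rw [NNReal.smul_def, smul_eq_mul, Real.coe_toNNReal _ (gaussianPDFReal_nonneg μ v x),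
        mul_comm, exp_mul_gaussianPDFReal']
    rw [funext this, integral_const_mul, integral_gaussianPDFReal_eq_one _ hv, mul_one]

lemma integrable_exp_gaussianReal' (μ : ℝ) (v : ℝ≥0) :
    Integrable Real.exp (gaussianReal μ v) := by
  by_cases hv : v = 0
  · rw [hv, gaussianReal_zero_var]
    exact (integrable_const (Real.exp μ)).congr (MeasureTheory.ae_eq_dirac Real.exp).symm
  · rw [gaussianReal_of_var_ne_zero _ hv]
    rw [integrable_withDensity_iff (measurable_gaussianPDF μ v)
      (Filter.Eventually.of_forall fun x => ENNReal.ofReal_lt_top)]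
    have : ∀ x, Real.exp x * (gaussianPDF μ v x).toReal
        = Real.exp (μ + v/2) * gaussianPDFReal (μ + v) v x := by
      intro x
      rw [gaussianPDF, ENNReal.toReal_ofReal (gaussianPDFReal_nonneg μ v x),
        exp_mul_gaussianPDFReal']
    rw [funext this]
    exact (integrable_gaussianPDFReal _ _).const_mul _

lemma jensen_log' {Ω : Type*} [MeasurableSpace Ω] (P : Measure Ω) [IsProbabilityMeasure P]
    (f : Ω → ℝ) (hf : Integrable f P) (h1 : ∀ ω, 1 ≤ f ω) :
    ∫ ω, Real.log (f ω) ∂P ≤ Real.log (∫ ω, f ω ∂P) := by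
  set t : ℝ := ∫ ω, f ω ∂P with ht
  have ht1 : 1 ≤ t := by
    have := integral_mono (integrable_const 1) hf h1
    simpa using this
  have ht0 : 0 < t := lt_of_lt_of_le one_pos ht1
  have hlogint : Integrable (fun ω => Real.log (f ω)) P := by
    refine hf.mono ((Real.measurable_log.comp_aemeasurable
      hf.aestronglyMeasurable.aemeasurable).aestronglyMeasurable) ?_
    refine Filter.Eventually.of_forall fun ω => ?_
    have h0 : 0 < f ω := lt_of_lt_of_le one_pos (h1 ω)
    rw [Real.norm_eq_abs, Real.norm_eq_abs, abs_of_nonneg (Real.log_nonneg (h1 ω)),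
      abs_of_pos h0]
    linarith [Real.log_le_sub_one_of_pos h0]
  have key : ∀ ω, Real.log (f ω) ≤ f ω / t + (Real.log t - 1) := by
    intro ω
    have h0 : 0 < f ω := lt_of_lt_of_le one_pos (h1 ω)
    have := Real.log_le_sub_one_of_pos (div_pos h0 ht0)
    rw [Real.log_div (ne_of_gt h0) (ne_of_gt ht0)] at this
    linarith
  calc ∫ ω, Real.log (f ω) ∂P ≤ ∫ ω, (f ω / t + (Real.log t - 1)) ∂P :=
        integral_mono hlogint ((hf.div_const t).add (integrable_const _)) key
    _ = t / t + (Real.log t - 1) := by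
        rw [integral_add (hf.div_const t) (integrable_const _), integral_div,
          integral_const]
        simp [← ht]
    _ = Real.log t := by rw [div_self (ne_of_gt ht0)]; ring

lemma mgf_aux' {Ω : Type*} [MeasurableSpace Ω] (P : Measure Ω) [IsProbabilityMeasure P]
    (Y : Ω → ℝ) (μ : ℝ) (σ2 : ℝ) (hσ : 0 ≤ σ2)
    (hY : P.map Y = gaussianReal μ (Real.toNNReal σ2)) (c : ℝ) :
    Integrable (fun ω => Real.exp (Y ω + c)) P ∧
      ∫ ω, Real.exp (Y ω + c) ∂P = Real.exp (μ + c + σ2 / 2) := by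
  have hae : AEMeasurable Y P := by
    by_contra h
    rw [Measure.map_of_not_aemeasurable h] at hY
    have h1 : (gaussianReal μ (Real.toNNReal σ2)) Set.univ = 1 := measure_univ
    rw [← hY] at h1
    simp at h1
  have hexpae : AEStronglyMeasurable Real.exp (P.map Y) :=
    Real.continuous_exp.aestronglyMeasurable
  have hIY : Integrable (fun ω => Real.exp (Y ω)) P := by
    have := (integrable_map_measure hexpae hae).mp (by
      rw [hY]; exact integrable_exp_gaussianReal' _ _)
    exact this
  have hIYval : ∫ ω, Real.exp (Y ω) ∂P = Real.exp (μ + σ2 / 2) := by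
    rw [← integral_map hae hexpae, hY, integral_exp_gaussianReal',
      Real.coe_toNNReal _ hσ]
  have heq : (fun ω => Real.exp (Y ω + c)) = fun ω => Real.exp c * Real.exp (Y ω) := by
    funext ω; rw [← Real.exp_add]; ring_nf
  constructor
  · rw [heq]; exact hIY.const_mul _
  · rw [heq, integral_const_mul, hIYval, ← Real.exp_add]; ring_nf

lemma neg_log_softmax' {ι : Type*} [Fintype ι] (A : ι → ℝ) (k : ι) :
    -Real.log (Real.exp (A k) / ∑ j, Real.exp (A j))
      = Real.log (∑ j, Real.exp (A j - A k)) := by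
  have hS : 0 < ∑ j, Real.exp (A j) :=
    Finset.sum_pos (fun j _ => Real.exp_pos _) ⟨k, Finset.mem_univ k⟩
  have h2 : ∑ j, Real.exp (A j - A k) = (∑ j, Real.exp (A j)) / Real.exp (A k) := by
    rw [Finset.sum_div]
    exact Finset.sum_congr rfl fun j _ => Real.exp_sub _ _
  rw [h2, Real.log_div (Real.exp_ne_zero _) (ne_of_gt hS),
    Real.log_div (ne_of_gt hS) (Real.exp_ne_zero _), Real.log_exp]
  ring

end Aux

set_option maxHeartbeats 1000000 in
/-- **Proposition 2 of the paper.** For a probability vector `p ∈ (0,1)^C`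
and `ã ~ N(a, λΣ)`, the expected soft-label cross-entropy is upper bounded by the
semi-supervised ISDA surrogate loss. -/
theorem isda_semi_supervised_upper_bound {Ω : Type*} [MeasurableSpace Ω] {A C : ℕ}
    (P : Measure Ω) [IsProbabilityMeasure P] (X : Ω → Fin A → ℝ) (a : Fin A → ℝ)
    (Sig : Matrix (Fin A) (Fin A) ℝ) (lam : ℝ) (hlam : 0 ≤ lam) (hSig : Sig.PosSemidef)
    (hX : IsMvGaussian P X a (lam • Sig))
    (w : Fin C → Fin A → ℝ) (b : Fin C → ℝ)
    (p : Fin C → ℝ) (hp0 : ∀ k, 0 < p k) (hp1 : ∀ k, p k < 1) (hp : ∑ k, p k = 1) :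
    ∑ k, p k * ∫ ω,
        -Real.log (Real.exp (w k ⬝ᵥ X ω + b k) / ∑ j, Real.exp (w j ⬝ᵥ X ω + b j)) ∂P ≤
      ∑ k, -(p k) * Real.log (Real.exp (w k ⬝ᵥ a + b k) /
        ∑ j, Real.exp (w j ⬝ᵥ a + b j +
          lam / 2 * ((w j - w k) ⬝ᵥ Sig.mulVec (w j - w k)))) := by
  apply Finset.sum_le_sum
  intro k _
  set v : Fin C → Fin A → ℝ := fun j => w j - w k with hv
  set c : Fin C → ℝ := fun j => b j - b k with hc
  -- variance of each linear functional
  have hq0 : ∀ j, 0 ≤ v j ⬝ᵥ Sig.mulVec (v j) := by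
    intro j
    have := hSig.dotProduct_mulVec_nonneg (v j)
    simpa using this
  have hvar : ∀ j, v j ⬝ᵥ (lam • Sig).mulVec (v j) = lam * (v j ⬝ᵥ Sig.mulVec (v j)) := by
    intro j
    rw [Matrix.smul_mulVec, dotProduct_smul, smul_eq_mul]
  have hvar0 : ∀ j, 0 ≤ v j ⬝ᵥ (lam • Sig).mulVec (v j) := by
    intro j; rw [hvar j]; exact mul_nonneg hlam (hq0 j)
  -- per-class MGF facts
  have hmgf : ∀ j, Integrable (fun ω => Real.exp (v j ⬝ᵥ X ω + c j)) P ∧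
      ∫ ω, Real.exp (v j ⬝ᵥ X ω + c j) ∂P
        = Real.exp (v j ⬝ᵥ a + c j + (v j ⬝ᵥ (lam • Sig).mulVec (v j)) / 2) :=
    fun j => mgf_aux' P (fun ω => v j ⬝ᵥ X ω) (v j ⬝ᵥ a) _ (hvar0 j) (hX (v j)) (c j)
  -- the integrand rewriting
  have hLHS : (fun ω => -Real.log (Real.exp (w k ⬝ᵥ X ω + b k) /
        ∑ j, Real.exp (w j ⬝ᵥ X ω + b j)))
      = fun ω => Real.log (∑ j, Real.exp (v j ⬝ᵥ X ω + c j)) := by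
    funext ω
    rw [neg_log_softmax' (fun j => w j ⬝ᵥ X ω + b j) k]
    congr 1
    refine Finset.sum_congr rfl fun j _ => ?_
    congr 1
    simp only [hv, hc, sub_dotProduct]
    ring
  -- Jensen + MGF bound
  have hf : Integrable (fun ω => ∑ j, Real.exp (v j ⬝ᵥ X ω + c j)) P :=
    integrable_finset_sum _ fun j _ => (hmgf j).1
  have h1 : ∀ ω, 1 ≤ ∑ j, Real.exp (v j ⬝ᵥ X ω + c j) := by
    intro ω
    have hterm : Real.exp (v k ⬝ᵥ X ω + c k) = 1 := by
      simp [hv, hc]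
    calc (1:ℝ) = Real.exp (v k ⬝ᵥ X ω + c k) := hterm.symm
      _ ≤ ∑ j, Real.exp (v j ⬝ᵥ X ω + c j) :=
        Finset.single_le_sum (f := fun j => Real.exp (v j ⬝ᵥ X ω + c j)) (fun j _ => (Real.exp_pos _).le) (Finset.mem_univ k)
  have hjensen := jensen_log' P _ hf h1
  have hival : ∫ ω, (∑ j, Real.exp (v j ⬝ᵥ X ω + c j)) ∂P
      = ∑ j, Real.exp (v j ⬝ᵥ a + c j + (v j ⬝ᵥ (lam • Sig).mulVec (v j)) / 2) := by
    rw [integral_finset_sum _ fun j _ => (hmgf j).1]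
    exact Finset.sum_congr rfl fun j _ => (hmgf j).2
  rw [hival] at hjensen
  -- rewrite the RHS
  have hRHS : -Real.log (Real.exp (w k ⬝ᵥ a + b k) /
        ∑ j, Real.exp (w j ⬝ᵥ a + b j +
          lam / 2 * ((w j - w k) ⬝ᵥ Sig.mulVec (w j - w k))))
      = Real.log (∑ j, Real.exp (v j ⬝ᵥ a + c j
          + (v j ⬝ᵥ (lam • Sig).mulVec (v j)) / 2)) := by
    have hBk : w k ⬝ᵥ a + b k
        = (fun j => w j ⬝ᵥ a + b j + lam / 2 * ((w j - w k) ⬝ᵥ Sig.mulVec (w j - w k))) k := by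
      simp
    rw [hBk, neg_log_softmax'
      (fun j => w j ⬝ᵥ a + b j + lam / 2 * ((w j - w k) ⬝ᵥ Sig.mulVec (w j - w k))) k]
    congr 1
    refine Finset.sum_congr rfl fun j _ => ?_
    congr 1
    rw [hvar j]
    simp only [hv, hc, sub_dotProduct]
    simp only [sub_self, zero_dotProduct, dotProduct]
    ring_nf
  rw [hLHS]
  refine le_trans (mul_le_mul_of_nonneg_left hjensen (hp0 k).le) (le_of_eq ?_)
  rw [← hRHS]
  ring
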